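/- Let p_n, p ∈ M_r be probability measures on ℤ^N with finite r-th moment. Then |p_n − p|_r → 0 if and only if for every f : ℤ^N → ℝ of polynomial growth of degree r (f ∈ C_r), Σ_x f(x) p_n(x) → Σ_x f(x) p(x). -/
import Mathlib


/-- `nrm` is a norm on `ℝ^N`. -/
def IsNormOn (N : ℕ) (nrm : (Fin N → ℝ) → ℝ) : Prop :=
  (∀ v, 0 ≤ nrm v) ∧ (∀ v, nrm v = 0 ↔ v = 0) ∧
  (∀ (c : ℝ) (v), nrm (c • v) = |c| * nrm v) ∧
  (∀ v w, nrm (v + w) ≤ nrm v + nrm w)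

/-- The norm restricted to lattice points `ℤ^N`. -/
noncomputable def latNorm {N : ℕ} (nrm : (Fin N → ℝ) → ℝ) (x : Fin N → ℤ) : ℝ :=
  nrm (fun i => (x i : ℝ))

theorem stmt7 (N : ℕ) (hN : 1 ≤ N) (nrm : (Fin N → ℝ) → ℝ) (hnrm : IsNormOn N nrm)
    (r : ℕ) (p : ℕ → (Fin N → ℤ) → ℝ) (q : (Fin N → ℤ) → ℝ)
    -- p_n, p are probability measures with finite r-th moment (members of M_r ∩ P)
    (hpn_nonneg : ∀ n x, 0 ≤ p n x) (hq_nonneg : ∀ x, 0 ≤ q x)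
    (hpn_mom : ∀ n, Summable (fun x => (1 + latNorm nrm x ^ r) * p n x))
    (hq_mom : Summable (fun x => (1 + latNorm nrm x ^ r) * q x))
    (hpn_prob : ∀ n, ∑' x : Fin N → ℤ, p n x = 1)
    (hq_prob : ∑' x : Fin N → ℤ, q x = 1) :
    Filter.Tendsto
        (fun n => ∑' x : Fin N → ℤ, (1/2) * (1 + latNorm nrm x ^ r) * |p n x - q x|)
        Filter.atTop (nhds 0)
      ↔ ∀ f : (Fin N → ℤ) → ℝ,
          (∃ α > (0:ℝ), ∀ x, |f x| ≤ α * (latNorm nrm x ^ r + 1)) →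
          Filter.Tendsto (fun n => ∑' x : Fin N → ℤ, f x * p n x) Filter.atTop
            (nhds (∑' x : Fin N → ℤ, f x * q x)) := by
  classical
  set w : (Fin N → ℤ) → ℝ := fun x => 1 + latNorm nrm x ^ r with hw_def
  have hw0 : ∀ x, 0 ≤ w x := fun x => by
    have := pow_nonneg (hnrm.1 (fun i => (x i : ℝ))) r
    simp only [hw_def]; unfold latNorm; linarith
  have hw1 : ∀ x, 1 ≤ w x := fun x => by
    have := pow_nonneg (hnrm.1 (fun i => (x i : ℝ))) r
    simp only [hw_def]; unfold latNorm; linarith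
  -- summability of w * |p n - q|
  have hdiff_sum : ∀ n, Summable (fun x => w x * |p n x - q x|) := by
    intro n
    apply Summable.of_nonneg_of_le
      (fun x => mul_nonneg (hw0 x) (abs_nonneg _))
      (fun x => ?_) ((hpn_mom n).add hq_mom)
    have h1 : |p n x - q x| ≤ p n x + q x := by
      have := abs_sub_abs_le_abs_sub (p n x) (q x)
      rw [abs_sub_le_iff]
      constructor <;> nlinarith [hpn_nonneg n x, hq_nonneg x, abs_nonneg (p n x - q x)]
    calc w x * |p n x - q x| ≤ w x * (p n x + q x) :=
          mul_le_mul_of_nonneg_left h1 (hw0 x)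
      _ = w x * p n x + w x * q x := by ring
  constructor
  · -- norm convergence implies convergence of integrals
    intro h f hf
    obtain ⟨α, hα, hfb⟩ := hf
    have hfpn : ∀ n, Summable (fun x => f x * p n x) := by
      intro n
      apply Summable.of_norm
      apply Summable.of_nonneg_of_le (fun x => norm_nonneg _) (fun x => ?_)
        (((hpn_mom n).mul_left α))
      have : ‖f x * p n x‖ = |f x| * p n x := by
        rw [norm_mul, Real.norm_eq_abs, Real.norm_eq_abs, abs_of_nonneg (hpn_nonneg n x)]
      rw [this]
      have hwe : α * (latNorm nrm x ^ r + 1) = α * w x := by simp only [hw_def]; ring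
      calc |f x| * p n x ≤ (α * w x) * p n x := by
            apply mul_le_mul_of_nonneg_right _ (hpn_nonneg n x)
            rw [← hwe]; exact hfb x
        _ = α * (w x * p n x) := by ring
    have hfq : Summable (fun x => f x * q x) := by
      apply Summable.of_norm
      apply Summable.of_nonneg_of_le (fun x => norm_nonneg _) (fun x => ?_)
        ((hq_mom.mul_left α))
      have h1 : ‖f x * q x‖ = |f x| * q x := by
        rw [norm_mul, Real.norm_eq_abs, Real.norm_eq_abs, abs_of_nonneg (hq_nonneg x)]
      rw [h1]
      calc |f x| * q x ≤ (α * (latNorm nrm x ^ r + 1)) * q x :=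
            mul_le_mul_of_nonneg_right (hfb x) (hq_nonneg x)
        _ = α * (w x * q x) := by simp only [hw_def]; ring
    rw [Metric.tendsto_atTop] at h ⊢
    intro ε hε
    obtain ⟨n₀, hn₀⟩ := h (ε / (2 * α)) (by positivity)
    refine ⟨n₀, fun n hn => ?_⟩
    have key : |∑' x, f x * p n x - ∑' x, f x * q x| ≤
        2 * α * ∑' x, (1/2) * w x * |p n x - q x| := by
      rw [← Summable.tsum_sub (hfpn n) hfq]
      calc |∑' x, (f x * p n x - f x * q x)| ≤ ∑' x, |f x * p n x - f x * q x| := by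
            have := norm_tsum_le_tsum_norm (f := fun x => f x * p n x - f x * q x)
              (by simpa [Real.norm_eq_abs] using ((hfpn n).sub hfq).abs)
            simpa [Real.norm_eq_abs] using this
        _ ≤ ∑' x, 2 * α * ((1/2) * w x * |p n x - q x|) := by
            apply Summable.tsum_le_tsum _ ((hfpn n).sub hfq).abs
              (((hdiff_sum n).mul_left (1/2)).congr (fun x => by ring) |>.mul_left (2*α))
            intro x
            have : |f x * p n x - f x * q x| = |f x| * |p n x - q x| := by
              rw [← abs_mul]; ring_nf
            rw [this]
            have h2 : 2 * α * ((1/2) * w x * |p n x - q x|) = (α * w x) * |p n x - q x| := by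
              ring
            rw [h2]
            apply mul_le_mul_of_nonneg_right _ (abs_nonneg _)
            have hwe : α * (latNorm nrm x ^ r + 1) = α * w x := by simp only [hw_def]; ring
            rw [← hwe]; exact hfb x
        _ = 2 * α * ∑' x, (1/2) * w x * |p n x - q x| := by
            rw [tsum_mul_left]
    have := hn₀ n hn
    rw [Real.dist_eq] at this ⊢
    have hnn : 0 ≤ ∑' x, (1/2) * w x * |p n x - q x| :=
      tsum_nonneg (fun x => mul_nonneg (mul_nonneg (by norm_num) (hw0 x)) (abs_nonneg _))
    rw [sub_zero, abs_of_nonneg hnn] at this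
    calc |∑' x, f x * p n x - ∑' x, f x * q x| ≤
          2 * α * ∑' x, (1/2) * w x * |p n x - q x| := key
      _ < 2 * α * (ε / (2 * α)) := by
          apply mul_lt_mul_of_pos_left this (by linarith)
      _ = ε := by field_simp
  · -- weak convergence implies norm convergence (Scheffé)
    intro h
    -- pointwise convergence of p n x to q x
    have hpt : ∀ x₀, Filter.Tendsto (fun n => p n x₀) Filter.atTop (nhds (q x₀)) := by
      intro x₀
      have hf : ∃ α > (0:ℝ), ∀ x, |(fun x => if x = x₀ then (1:ℝ) else 0) x| ≤
          α * (latNorm nrm x ^ r + 1) := by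
        refine ⟨1, one_pos, fun x => ?_⟩
        have h1 : latNorm nrm x ^ r + 1 = w x := by simp only [hw_def]; ring
        rw [h1, one_mul]
        show |if x = x₀ then (1:ℝ) else 0| ≤ w x
        split_ifs <;> simp <;> linarith [hw1 x]
      have := h _ hf
      have e1 : ∀ g : (Fin N → ℤ) → ℝ,
          (∑' x, (if x = x₀ then (1:ℝ) else 0) * g x) = g x₀ := by
        intro g
        rw [tsum_eq_single x₀ (fun b hb => by simp [hb])]
        simp
      rw [e1] at this
      convert this using 1
      ext n; rw [e1]
    have haw : ∀ x₀, Filter.Tendsto (fun n => w x₀ * p n x₀) Filter.atTop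
        (nhds (w x₀ * q x₀)) := fun x₀ => (hpt x₀).const_mul _
    -- convergence of total weighted mass
    have hmass : Filter.Tendsto (fun n => ∑' x, w x * p n x) Filter.atTop
        (nhds (∑' x, w x * q x)) := by
      have hf : ∃ α > (0:ℝ), ∀ x, |w x| ≤ α * (latNorm nrm x ^ r + 1) := by
        refine ⟨1, one_pos, fun x => ?_⟩
        rw [abs_of_nonneg (hw0 x), one_mul]
        simp only [hw_def]; linarith
      exact h w hf
    -- min(w p_n, w q) converges to w q in sum (dominated convergence)
    have hmin : Filter.Tendsto (fun n => ∑' x, min (w x * p n x) (w x * q x))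
        Filter.atTop (nhds (∑' x, w x * q x)) := by
      have := tendsto_tsum_of_dominated_convergence (𝓕 := Filter.atTop)
        (f := fun n x => min (w x * p n x) (w x * q x)) (g := fun x => w x * q x)
        (bound := fun x => w x * q x) hq_mom
        (fun x => by
          have h5 : Filter.Tendsto (fun n => min (w x * p n x) (w x * q x)) Filter.atTop
              (nhds (min (w x * q x) (w x * q x))) := (haw x).min tendsto_const_nhds
          simpa [min_self] using h5)
        (Filter.Eventually.of_forall (fun n x => by
          rw [Real.norm_eq_abs, abs_of_nonneg (le_min (mul_nonneg (hw0 x) (hpn_nonneg n x))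
            (mul_nonneg (hw0 x) (hq_nonneg x)))]
          exact min_le_right _ _))
      exact this
    -- summability of min
    have hmin_sum : ∀ n, Summable (fun x => min (w x * p n x) (w x * q x)) := by
      intro n
      exact Summable.of_nonneg_of_le
        (fun x => le_min (mul_nonneg (hw0 x) (hpn_nonneg n x))
          (mul_nonneg (hw0 x) (hq_nonneg x)))
        (fun x => min_le_right _ _) hq_mom
    -- the identity: (1/2) w |p_n - q| = (1/2)(w p_n + w q - 2 min)
    have hkey : ∀ n, (∑' x, (1/2) * w x * |p n x - q x|) =
        (1/2) * ((∑' x, w x * p n x) + (∑' x, w x * q x)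
          - 2 * ∑' x, min (w x * p n x) (w x * q x)) := by
      intro n
      have e2 : ∀ x, (1/2) * w x * |p n x - q x| =
          (1/2) * ((w x * p n x + w x * q x) - 2 * min (w x * p n x) (w x * q x)) := by
        intro x
        have h3 : w x * |p n x - q x| = |w x * p n x - w x * q x| := by
          rw [← mul_sub, abs_mul, abs_of_nonneg (hw0 x)]
        rw [mul_assoc, h3]
        rcases le_total (w x * p n x) (w x * q x) with hle | hle
        · rw [min_eq_left hle, abs_of_nonpos (by linarith)]; ring
        · rw [min_eq_right hle, abs_of_nonneg (by linarith)]; ring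
      calc (∑' x, (1/2) * w x * |p n x - q x|)
          = ∑' x, (1/2) * ((w x * p n x + w x * q x)
              - 2 * min (w x * p n x) (w x * q x)) := by
            exact tsum_congr e2
        _ = (1/2) * ∑' x, ((w x * p n x + w x * q x)
              - 2 * min (w x * p n x) (w x * q x)) := tsum_mul_left
        _ = (1/2) * ((∑' x, (w x * p n x + w x * q x))
              - ∑' x, 2 * min (w x * p n x) (w x * q x)) := by
            rw [Summable.tsum_sub ((hpn_mom n).add hq_mom) ((hmin_sum n).mul_left 2)]
        _ = (1/2) * ((∑' x, w x * p n x) + (∑' x, w x * q x)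
              - 2 * ∑' x, min (w x * p n x) (w x * q x)) := by
            rw [Summable.tsum_add (hpn_mom n) hq_mom, tsum_mul_left]
    have hlim : Filter.Tendsto
        (fun n => (1/2) * ((∑' x, w x * p n x) + (∑' x, w x * q x)
          - 2 * ∑' x, min (w x * p n x) (w x * q x)))
        Filter.atTop (nhds 0) := by
      have : ((1:ℝ)/2) * ((∑' x, w x * q x) + (∑' x, w x * q x)
          - 2 * ∑' x, w x * q x) = 0 := by ring
      rw [← this]
      exact ((hmass.add_const _).sub (hmin.const_mul 2)).const_mul (1/2)
    refine hlim.congr (fun n => ?_)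
    exact (hkey n).symm
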